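/- For every multiset partition m of {1^k,1'^k} of rank at most n, one has the operator identity τ_k ∘ T_m ∘ π_k = (1/α_m) Σ_d x_d on F[X(n,k)], where the sum is over all set partitions d of {1,…,k} ⊔ {1',…,k'} whose block-type multiset {(|B ∩ {1,…,k}|, |B ∩ {1',…,k'}|) : B a block of d} equals m, and where α_m = k!/∏_{(p,q)∈m} q!. -/

import Mathlib

/-- `M(n,k)`: the set of `n`-tuples of non-negative integers summing to `k`. -/
abbrev Mnk (n k : ℕ) : Type := {a : Fin n → ℕ // ∑ i, a i = k}

instance (n k : ℕ) : Fintype (Mnk n k) :=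
  Fintype.subtype (Finset.Nat.antidiagonalTuple n k) fun _ =>
    Finset.Nat.mem_antidiagonalTuple

/-- The action of a permutation `w ∈ S_n` on `M(n,k)`: `(w • a)_i = a_{w⁻¹(i)}`. -/
def permA {n k : ℕ} (w : Equiv.Perm (Fin n)) (a : Mnk n k) : Mnk n k :=
  ⟨fun i => a.1 (w⁻¹ i), (Equiv.sum_comp w⁻¹ a.1).trans a.2⟩

/-- `E(a,b)`: the multiset `{(a_1,b_1),…,(a_n,b_n)}` with all copies of `(0,0)` removed. -/
def Epairs {n k : ℕ} (a b : Mnk n k) : Multiset (ℕ × ℕ) :=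
  (Multiset.map (fun i => (a.1 i, b.1 i)) Finset.univ.val).filter fun p => p ≠ (0, 0)

/-- A multiset partition of `{1^k, 1'^k}`, encoded as a multiset of pairs `(p,q)` of
non-negative integers, each pair `≠ (0,0)`, with first coordinates summing to `k` and
second coordinates summing to `k`. -/
def IsMSP (k : ℕ) (m : Multiset (ℕ × ℕ)) : Prop :=
  (0, 0) ∉ m ∧ (m.map Prod.fst).sum = k ∧ (m.map Prod.snd).sum = k

/-- The integral operator `T_m` on `F[M(n,k)]`, determined by
`T_m(1_a) = Σ_{b : E(a,b) = m} 1_b`. -/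
def Tm (F : Type) [Field F] (n k : ℕ) (m : Multiset (ℕ × ℕ)) :
    Module.End F (Mnk n k → F) where
  toFun f b := ∑ a : Mnk n k, if Epairs a b = m then f a else 0
  map_add' f g := by
    funext b
    simp only [Pi.add_apply]
    rw [← Finset.sum_add_distrib]
    refine Finset.sum_congr rfl fun a _ => ?_
    by_cases h : Epairs a b = m <;> simp [h]
  map_smul' c f := by
    funext b
    simp only [RingHom.id_apply, Pi.smul_apply, smul_eq_mul]
    rw [Finset.mul_sum]
    refine Finset.sum_congr rfl fun a _ => ?_
    by_cases h : Epairs a b = m <;> simp [h]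


/-- The content of `A ∈ X(n,k) = {functions {1,…,k} → {1,…,n}}`:
`ct(A)_j = |A⁻¹(j)|`, an element of `M(n,k)`. -/
def ctM (n k : ℕ) (A : Fin k → Fin n) : Mnk n k :=
  ⟨fun j => (Finset.univ.filter fun r => A r = j).card, by
    have h := Finset.card_eq_sum_card_fiberwise
      (s := (Finset.univ : Finset (Fin k))) (t := (Finset.univ : Finset (Fin n)))
      (f := A) (fun x _ => Finset.mem_univ _)
    simpa using h.symm⟩

/-- The canonical projection `π_k : F[X(n,k)] → F[M(n,k)]`, `π_k(1_A) = 1_{ct(A)}`. -/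
def piOp (F : Type) [Field F] (n k : ℕ) :
    ((Fin k → Fin n) → F) →ₗ[F] (Mnk n k → F) where
  toFun f a := ∑ A : Fin k → Fin n, if ctM n k A = a then f A else 0
  map_add' f g := by
    funext a
    simp only [Pi.add_apply]
    rw [← Finset.sum_add_distrib]
    refine Finset.sum_congr rfl fun A _ => ?_
    by_cases h : ctM n k A = a <;> simp [h]
  map_smul' c f := by
    funext a
    simp only [RingHom.id_apply, Pi.smul_apply, smul_eq_mul]
    rw [Finset.mul_sum]
    refine Finset.sum_congr rfl fun A _ => ?_
    by_cases h : ctM n k A = a <;> simp [h]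

/-- The section `τ_k : F[M(n,k)] → F[X(n,k)]`,
`τ_k(1_a) = (a_1!⋯a_n!/k!) Σ_{A : ct(A)=a} 1_A`. -/
noncomputable def tauOp (F : Type) [Field F] (n k : ℕ) :
    (Mnk n k → F) →ₗ[F] ((Fin k → Fin n) → F) where
  toFun f A :=
    (((∏ j, Nat.factorial ((ctM n k A).1 j) : ℕ) : F) / (Nat.factorial k : F)) *
      f (ctM n k A)
  map_add' f g := by funext A; simp [mul_add]
  map_smul' c f := by
    funext A
    simp only [RingHom.id_apply, Pi.smul_apply, smul_eq_mul]
    ring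

noncomputable instance {k : ℕ} :
    Fintype (Finpartition (Finset.univ : Finset (Fin k ⊕ Fin k))) :=
  Fintype.ofInjective Finpartition.parts fun p q h => by
    cases p; cases q; simpa using h

/-- The block-type multiset of a set partition `d` of `{1,…,k} ⊔ {1',…,k'}`:
the multiset of pairs `(|B ∩ unprimed|, |B ∩ primed|)` over the blocks `B` of `d`. -/
def blockTypeP {k : ℕ} (d : Finpartition (Finset.univ : Finset (Fin k ⊕ Fin k))) :
    Multiset (ℕ × ℕ) :=
  d.parts.val.map fun B =>
    ((B.filter fun x => x.isLeft = true).card, (B.filter fun x => x.isRight = true).card)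

/-- The orbit-basis operator `x_d` on `F[X(n,k)]` attached to a set partition `d` of
`{1,…,k} ⊔ {1',…,k'}`: `x_d(1_A) = Σ_C 1_C`, the sum over those `C` such that the joint
function `Sum.elim A C` takes equal values at two points precisely when they lie in the
same block of `d`. -/
def xdOp (F : Type) [Field F] (n k : ℕ)
    (d : Finpartition (Finset.univ : Finset (Fin k ⊕ Fin k))) :
    Module.End F ((Fin k → Fin n) → F) where
  toFun f C := ∑ A : Fin k → Fin n,
    if (∀ x y : Fin k ⊕ Fin k,
        Sum.elim A C x = Sum.elim A C y ↔ ∃ B ∈ d.parts, x ∈ B ∧ y ∈ B) then f A else 0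
  map_add' f g := by
    funext C
    simp only [Pi.add_apply]
    rw [← Finset.sum_add_distrib]
    refine Finset.sum_congr rfl fun A _ => ?_
    split <;> simp
  map_smul' c f := by
    funext C
    simp only [RingHom.id_apply, Pi.smul_apply, smul_eq_mul]
    rw [Finset.mul_sum]
    refine Finset.sum_congr rfl fun A _ => ?_
    split <;> simp

namespace Stmt7Aux

variable {n k : ℕ}

def fib (A C : Fin k → Fin n) (j : Fin n) : Finset (Fin k ⊕ Fin k) :=
  Finset.univ.filter (fun x => Sum.elim A C x = j)

def Cond (A C : Fin k → Fin n) (d : Finpartition (Finset.univ : Finset (Fin k ⊕ Fin k))) : Prop :=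
  ∀ x y : Fin k ⊕ Fin k, Sum.elim A C x = Sum.elim A C y ↔ ∃ B ∈ d.parts, x ∈ B ∧ y ∈ B

lemma parts_char {A C : Fin k → Fin n} {d : Finpartition (Finset.univ : Finset (Fin k ⊕ Fin k))}
    (h : Cond A C d) (B : Finset (Fin k ⊕ Fin k)) :
    B ∈ d.parts ↔ ∃ j : Fin n, (fib A C j).Nonempty ∧ fib A C j = B := by
  have key : ∀ x : Fin k ⊕ Fin k, ∀ B ∈ d.parts, x ∈ B → fib A C (Sum.elim A C x) = B := by
    intro x B hB hx
    ext y
    simp only [fib, Finset.mem_filter, Finset.mem_univ, true_and]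
    constructor
    · intro hy
      obtain ⟨B', hB', hxB', hyB'⟩ := (h x y).1 hy.symm
      rwa [d.eq_of_mem_parts hB' hB hxB' hx] at hyB'
    · intro hy
      exact ((h x y).2 ⟨B, hB, hx, hy⟩).symm
  constructor
  · intro hB
    obtain ⟨x, hx⟩ := d.nonempty_of_mem_parts hB
    exact ⟨Sum.elim A C x, ⟨x, by simp [fib]⟩, key x B hB hx⟩
  · rintro ⟨j, ⟨x, hx⟩, rfl⟩
    obtain ⟨B, hB, hxB⟩ := d.exists_mem (Finset.mem_univ x)
    have hj : Sum.elim A C x = j := by simpa [fib] using hx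
    rw [← hj, key x B hB hxB]
    exact hB

lemma cond_unique {A C : Fin k → Fin n}
    {d d' : Finpartition (Finset.univ : Finset (Fin k ⊕ Fin k))}
    (h : Cond A C d) (h' : Cond A C d') : d = d' := by
  have : d.parts = d'.parts := by
    ext B; rw [parts_char h, parts_char h']
  cases d; cases d'; simpa using this

lemma cond_exists (A C : Fin k → Fin n) :
    ∃ d : Finpartition (Finset.univ : Finset (Fin k ⊕ Fin k)), Cond A C d := by
  haveI : DecidableRel (Setoid.ker (Sum.elim A C)).r := fun x y =>
    decidable_of_iff (Sum.elim A C x = Sum.elim A C y) Iff.rfl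
  refine ⟨Finpartition.ofSetoid (Setoid.ker (Sum.elim A C)), fun x y => ?_⟩
  constructor
  · intro hxy
    exact ⟨_, (Finpartition.part_mem _).2 (Finset.mem_univ x),
      Finpartition.mem_part _ (Finset.mem_univ x),
      (Finpartition.mem_part_ofSetoid_iff_rel (s := Setoid.ker (Sum.elim A C))).2 hxy⟩
  · rintro ⟨B, hB, hxB, hyB⟩
    have := Finpartition.part_eq_of_mem _ hB hxB
    rw [← this] at hyB
    exact Finpartition.mem_part_ofSetoid_iff_rel.1 hyB

lemma ctM_apply (A : Fin k → Fin n) (j : Fin n) :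
    (ctM n k A).1 j = (Finset.univ.filter fun r => A r = j).card := rfl

lemma card_filter_left (A C : Fin k → Fin n) (j : Fin n) :
    ((fib A C j).filter fun x => x.isLeft = true).card = (ctM n k A).1 j := by
  have : ((fib A C j).filter fun x => x.isLeft = true)
      = (Finset.univ.filter fun r : Fin k => A r = j).map ⟨Sum.inl, Sum.inl_injective⟩ := by
    ext x
    cases x <;> simp [fib]
  rw [this, Finset.card_map, ctM_apply]

lemma card_filter_right (A C : Fin k → Fin n) (j : Fin n) :
    ((fib A C j).filter fun x => x.isRight = true).card = (ctM n k C).1 j := by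
  have : ((fib A C j).filter fun x => x.isRight = true)
      = (Finset.univ.filter fun s : Fin k => C s = j).map ⟨Sum.inr, Sum.inr_injective⟩ := by
    ext x
    cases x <;> simp [fib]
  rw [this, Finset.card_map, ctM_apply]

lemma fib_nonempty_iff (A C : Fin k → Fin n) (j : Fin n) :
    (fib A C j).Nonempty ↔ ((ctM n k A).1 j, (ctM n k C).1 j) ≠ ((0 : ℕ), (0 : ℕ)) := by
  constructor
  · rintro ⟨x, hx⟩ hc
    have h1 : (ctM n k A).1 j = 0 := (Prod.mk.injEq _ _ _ _ ▸ hc : _ ∧ _).1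
    have h2 : (ctM n k C).1 j = 0 := (Prod.mk.injEq _ _ _ _ ▸ hc : _ ∧ _).2
    rw [← card_filter_left A C j, Finset.card_eq_zero] at h1
    rw [← card_filter_right A C j, Finset.card_eq_zero] at h2
    cases x with
    | inl r =>
      have : Sum.inl r ∈ (fib A C j).filter fun x : Fin k ⊕ Fin k => x.isLeft = true := by
        simp [hx]
      rw [h1] at this; simp at this
    | inr s =>
      have : Sum.inr s ∈ (fib A C j).filter fun x : Fin k ⊕ Fin k => x.isRight = true := by
        simp [hx]
      rw [h2] at this; simp at this
  · intro h
    rcases Finset.eq_empty_or_nonempty (fib A C j) with he | hne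
    · exfalso
      apply h
      rw [← card_filter_left A C j, ← card_filter_right A C j, he]
      simp
    · exact hne

lemma blockTypeP_of_cond {A C : Fin k → Fin n}
    {d : Finpartition (Finset.univ : Finset (Fin k ⊕ Fin k))} (h : Cond A C d) :
    blockTypeP d = Epairs (ctM n k A) (ctM n k C) := by
  classical
  have nd : ((Finset.univ.val : Multiset (Fin n)).filter
      fun j => (fib A C j).Nonempty).map (fib A C) |>.Nodup := by
    refine Multiset.Nodup.map_on ?_ (Multiset.Nodup.filter _ (Finset.univ : Finset (Fin n)).nodup)
    intro j hj j' hj' hfib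
    rw [Multiset.mem_filter] at hj hj'
    obtain ⟨x, hx⟩ := hj.2
    have hx' : x ∈ fib A C j' := hfib ▸ hx
    simp only [fib, Finset.mem_filter] at hx hx'
    rw [← hx.2, hx'.2]
  have hparts : d.parts.val =
      ((Finset.univ.val : Multiset (Fin n)).filter fun j => (fib A C j).Nonempty).map
        (fib A C) := by
    rw [Multiset.Nodup.ext d.parts.nodup nd]
    intro B
    rw [Finset.mem_val, parts_char h B]
    simp only [Multiset.mem_map, Multiset.mem_filter]
    constructor
    · rintro ⟨j, hne, hB⟩; exact ⟨j, ⟨by simp, hne⟩, hB⟩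
    · rintro ⟨j, ⟨_, hne⟩, hB⟩; exact ⟨j, hne, hB⟩
  have hfil : ((Finset.univ.val : Multiset (Fin n)).filter fun j => (fib A C j).Nonempty)
      = ((Finset.univ.val : Multiset (Fin n)).filter
          fun j => ((ctM n k A).1 j, (ctM n k C).1 j) ≠ ((0:ℕ), (0:ℕ))) :=
    Multiset.filter_congr fun j _ => fib_nonempty_iff A C j
  unfold blockTypeP Epairs
  rw [hparts, Multiset.map_map, Multiset.filter_map, hfil]
  refine Multiset.map_congr ?_ ?_
  · apply Multiset.filter_congr
    intro j _
    simp [Function.comp]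
  · intro j _
    simp only [Function.comp_apply]
    rw [card_filter_left, card_filter_right]



lemma factorial_prod {n k : ℕ} (a b : Mnk n k) :
    ((Epairs a b).map fun p => Nat.factorial p.2).prod = ∏ j, Nat.factorial (b.1 j) := by
  classical
  unfold Epairs
  rw [Multiset.filter_map, Multiset.map_map]
  simp only [Function.comp_def]
  rw [Finset.prod_eq_multiset_prod]
  have h1 : ((Multiset.filter (fun j : Fin n => ¬ (a.1 j, b.1 j) ≠ ((0:ℕ),(0:ℕ)))
      Finset.univ.val).map fun j => Nat.factorial (b.1 j)).prod = 1 := by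
    apply Multiset.prod_eq_one
    intro x hx
    rw [Multiset.mem_map] at hx
    obtain ⟨j, hj, rfl⟩ := hx
    rw [Multiset.mem_filter] at hj
    have : b.1 j = 0 := by
      have := hj.2
      simp only [not_not, Prod.mk.injEq] at this
      exact this.2
    rw [this]
    rfl
  conv_rhs => rw [← Multiset.filter_add_not (fun j : Fin n => (a.1 j, b.1 j) ≠ ((0:ℕ),(0:ℕ)))
      (Finset.univ.val)]
  rw [Multiset.map_add, Multiset.prod_add, h1, mul_one]

lemma coef_eq (F : Type) [Field F] {n k : ℕ} (a b : Mnk n k) (m : Multiset (ℕ × ℕ))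
    (hm : Epairs a b = m) :
    ((∏ j, Nat.factorial (b.1 j) : ℕ) : F) / (Nat.factorial k : F)
      = ((Nat.factorial k : F) / ((m.map fun p => ((Nat.factorial p.2 : ℕ) : F)).prod))⁻¹ := by
  rw [inv_div]
  congr 1
  subst hm
  rw [← factorial_prod a b, Nat.cast_multiset_prod, Multiset.map_map]
  rfl

end Stmt7Aux


/-- For every multiset partition `m` of `{1^k,1'^k}` of rank at most `n`:
`τ_k ∘ T_m ∘ π_k = (1/α_m) Σ_d x_d`, the sum over all set partitions `d` of
`{1,…,k} ⊔ {1',…,k'}` of block-type `m`, where `α_m = k!/∏_{(p,q)∈m} q!`. -/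
theorem stmt7 (F : Type) [Field F] (n k : ℕ) (hn : 0 < n) (hk : 0 < k)
    (m : Multiset (ℕ × ℕ)) (hm : IsMSP k m) (hrank : Multiset.card m ≤ n) :
    tauOp F n k ∘ₗ Tm F n k m ∘ₗ piOp F n k =
      ((Nat.factorial k : F) / ((m.map fun p => ((Nat.factorial p.2 : ℕ) : F)).prod))⁻¹ •
        ∑ d : {d : Finpartition (Finset.univ : Finset (Fin k ⊕ Fin k)) //
            blockTypeP d = m}, xdOp F n k d.1 := by
  classical
  apply LinearMap.ext; intro f
  funext C
  simp only [LinearMap.comp_apply, tauOp, Tm, piOp, xdOp, LinearMap.coe_mk, AddHom.coe_mk,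
    LinearMap.smul_apply, LinearMap.coe_sum, Finset.sum_apply, Pi.smul_apply, smul_eq_mul]
  have hL : (∑ a : Mnk n k, if Epairs a (ctM n k C) = m then
        (∑ A : Fin k → Fin n, if ctM n k A = a then f A else 0) else 0)
      = ∑ A : Fin k → Fin n, if Epairs (ctM n k A) (ctM n k C) = m then f A else 0 := by
    have step1 : ∀ a : Mnk n k, (if Epairs a (ctM n k C) = m then
          (∑ A : Fin k → Fin n, if ctM n k A = a then f A else 0) else 0)
        = ∑ A : Fin k → Fin n,
            if ctM n k A = a then (if Epairs a (ctM n k C) = m then f A else 0) else 0 := by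
      intro a
      split_ifs with h
      · exact Finset.sum_congr rfl fun A _ => by simp [h]
      · exact (Finset.sum_eq_zero fun A _ => by simp [h]).symm
    calc (∑ a : Mnk n k, if Epairs a (ctM n k C) = m then
            (∑ A : Fin k → Fin n, if ctM n k A = a then f A else 0) else 0)
        = ∑ a : Mnk n k, ∑ A : Fin k → Fin n,
            if ctM n k A = a then (if Epairs a (ctM n k C) = m then f A else 0) else 0 :=
          Finset.sum_congr rfl fun a _ => step1 a
      _ = ∑ A : Fin k → Fin n, ∑ a : Mnk n k,
            if ctM n k A = a then (if Epairs a (ctM n k C) = m then f A else 0) else 0 :=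
          Finset.sum_comm
      _ = ∑ A : Fin k → Fin n, if Epairs (ctM n k A) (ctM n k C) = m then f A else 0 := by
          refine Finset.sum_congr rfl fun A _ => ?_
          rw [Finset.sum_ite_eq]
          simp
  rw [hL]
  have hR : (∑ d : {d : Finpartition (Finset.univ : Finset (Fin k ⊕ Fin k)) //
        blockTypeP d = m}, ∑ A : Fin k → Fin n,
        if (∀ x y : Fin k ⊕ Fin k,
            Sum.elim A C x = Sum.elim A C y ↔ ∃ B ∈ d.1.parts, x ∈ B ∧ y ∈ B)
          then f A else 0)
      = ∑ A : Fin k → Fin n, if Epairs (ctM n k A) (ctM n k C) = m then f A else 0 := by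
    rw [Finset.sum_comm]
    refine Finset.sum_congr rfl fun A _ => ?_
    by_cases hE : Epairs (ctM n k A) (ctM n k C) = m
    · obtain ⟨d₀, hd₀⟩ := Stmt7Aux.cond_exists A C
      have hbt : blockTypeP d₀ = m := (Stmt7Aux.blockTypeP_of_cond hd₀).trans hE
      rw [if_pos hE]
      rw [Finset.sum_eq_single (⟨d₀, hbt⟩ : {d : Finpartition (Finset.univ :
          Finset (Fin k ⊕ Fin k)) // blockTypeP d = m})]
      · exact if_pos hd₀
      · intro b _ hb
        rw [if_neg]
        intro hc
        exact hb (Subtype.ext (Stmt7Aux.cond_unique hc hd₀))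
      · intro hmem
        exact absurd (Finset.mem_univ _) hmem
    · rw [if_neg hE]
      apply Finset.sum_eq_zero
      intro d _
      rw [if_neg]
      intro hc
      exact hE ((Stmt7Aux.blockTypeP_of_cond hc).symm.trans d.2)
  rw [hR, Finset.mul_sum, Finset.mul_sum]
  refine Finset.sum_congr rfl fun A _ => ?_
  by_cases hE : Epairs (ctM n k A) (ctM n k C) = m
  · rw [if_pos hE, Stmt7Aux.coef_eq F (ctM n k A) (ctM n k C) m hE]
  · rw [if_neg hE, mul_zero, mul_zero]
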